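/- Let A₀ ∈ ℝ^{n×n} be a Metzler matrix and ν₀ = (ν_{0,ij}) an n×n matrix of finite nonnegative Borel measures on [−h,0], and assume the positive linear delay system ẋ(t) = A₀ x(t) + ∫_{[−h,0]} d[ν₀(θ)] x(t+θ), t ≥ 0, is exponentially stable. Then every time-delay switched linear system ẋ(t) = A⁰_{σ(t)} x(t) + ∫_{[−h,0]} d[ν_{σ(t)}(θ)] x(t+θ), σ ∈ Σ₊, whose data satisfy, entrywise for every k = 1,…,N, M(A⁰_k) ≤ A₀ and V(ν_k) ≤ V(ν₀), is exponentially stable under arbitrary switching: there exist M > 0, α > 0 such that every solution with initial function φ ∈ C([−h,0],ℝⁿ) and any σ ∈ Σ₊ satisfies ‖x(t)‖ ≤ M e^{−αt} ‖φ‖ for all t ≥ 0. -/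

import Mathlib

open MeasureTheory Set Filter Matrix
open scoped ENNReal

noncomputable section

/-- Integral of a real function against a finite signed Borel measure. -/
def sint {α : Type*} [MeasurableSpace α] (s : MeasureTheory.SignedMeasure α) (f : α → ℝ) : ℝ :=
  (∫ a, f a ∂s.toJordanDecomposition.posPart) - ∫ a, f a ∂s.toJordanDecomposition.negPart

/-- Total variation of a finite signed measure, evaluated on the whole space. -/
def tvar {α : Type*} [MeasurableSpace α] (s : MeasureTheory.SignedMeasure α) : ℝ :=
  (s.totalVariation Set.univ).toReal

/-- Row-sum matrix norm (the operator norm induced by the `∞`-norm). -/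
def matNorm {p q : ℕ} (A : Matrix (Fin p) (Fin q) ℝ) : ℝ :=
  ⨆ i, ∑ j, |A i j|

/-- The Metzler matrix `M(A)` associated with `A`. -/
def metz {n : ℕ} (A : Matrix (Fin n) (Fin n) ℝ) : Matrix (Fin n) (Fin n) ℝ :=
  Matrix.of fun i j => if i = j then A i j else |A i j|

/-- The matrix `V(ν)` of total variations of a matrix of signed measures. -/
def Vmat {h : ℝ} {p q : ℕ}
    (ν : Fin p → Fin q → MeasureTheory.SignedMeasure (Set.Icc (-h) (0:ℝ))) :
    Matrix (Fin p) (Fin q) ℝ :=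
  Matrix.of fun i j => tvar (ν i j)

/-- The norm `‖ν‖ = max_i Σ_j |ν_{ij}|([-h,0])` of a matrix of signed measures. -/
def mnorm {h : ℝ} {p q : ℕ}
    (ν : Fin p → Fin q → MeasureTheory.SignedMeasure (Set.Icc (-h) (0:ℝ))) : ℝ :=
  ⨆ i, ∑ j, tvar (ν i j)

/-- A switching signal: piecewise constant, right continuous, with strictly
positive dwell time (and normalized to be constant on `(-∞, 0]`). -/
def IsSwitchingSignal {N : ℕ} (σ : ℝ → Fin N) : Prop :=
  (∀ t ≤ (0:ℝ), σ t = σ 0) ∧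
  ∃ d : ℝ, 0 < d ∧ ∃ τ : ℕ → ℝ, τ 0 = 0 ∧ (∀ k, τ k + d ≤ τ (k + 1)) ∧
    ∀ k : ℕ, ∀ t ∈ Set.Ico (τ k) (τ (k + 1)), σ t = σ (τ k)

/-- `x` is a solution of the switched delay system `ẋ(t) = A⁰_{σ(t)} x(t) +
∫_{[-h,0]} d[ν_{σ(t)}(θ)] x(t+θ)` with switching signal `σ` and initial function `φ`. -/
def IsSolution (h : ℝ) {N n : ℕ} (σ : ℝ → Fin N)
    (A : Fin N → Matrix (Fin n) (Fin n) ℝ)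
    (ν : Fin N → Fin n → Fin n → MeasureTheory.SignedMeasure (Set.Icc (-h) (0:ℝ)))
    (φ : C(Set.Icc (-h) (0:ℝ), Fin n → ℝ)) (x : ℝ → Fin n → ℝ) : Prop :=
  ContinuousOn x (Set.Ici (-h)) ∧
  (∀ θ : Set.Icc (-h) (0:ℝ), x (θ : ℝ) = φ θ) ∧
  ∀ t : ℝ, 0 ≤ t → (∀ᶠ s in nhds t, σ s = σ t) → ∀ i,
    HasDerivWithinAt (fun s => x s i)
      ((∑ j, A (σ t) i j * x t j) +
        ∑ j, sint (ν (σ t) i j) fun θ => x (t + (θ : ℝ)) j)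
      (Set.Ici t) t

/-- Exponential stability of the switched system under arbitrary switching. -/
def ExpStableSw (h : ℝ) {N n : ℕ}
    (A : Fin N → Matrix (Fin n) (Fin n) ℝ)
    (ν : Fin N → Fin n → Fin n → MeasureTheory.SignedMeasure (Set.Icc (-h) (0:ℝ))) : Prop :=
  ∃ M > (0:ℝ), ∃ α > (0:ℝ), ∀ σ : ℝ → Fin N, IsSwitchingSignal σ →
    ∀ φ x, IsSolution h σ A ν φ x →
      ∀ t ≥ (0:ℝ), ‖x t‖ ≤ M * Real.exp (-α * t) * ‖φ‖

/-- `x` is a solution of the (non-switched) delay system `(A, ν)` with initial function `φ`. -/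
def IsSolution1 (h : ℝ) {n : ℕ} (A : Matrix (Fin n) (Fin n) ℝ)
    (ν : Fin n → Fin n → MeasureTheory.SignedMeasure (Set.Icc (-h) (0:ℝ)))
    (φ : C(Set.Icc (-h) (0:ℝ), Fin n → ℝ)) (x : ℝ → Fin n → ℝ) : Prop :=
  ContinuousOn x (Set.Ici (-h)) ∧
  (∀ θ : Set.Icc (-h) (0:ℝ), x (θ : ℝ) = φ θ) ∧
  ∀ t : ℝ, 0 ≤ t → ∀ i,
    HasDerivWithinAt (fun s => x s i)
      ((∑ j, A i j * x t j) + ∑ j, sint (ν i j) fun θ => x (t + (θ : ℝ)) j)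
      (Set.Ici t) t

/-- Exponential stability of a single (non-switched) delay system. -/
def ExpStable1 (h : ℝ) {n : ℕ} (A : Matrix (Fin n) (Fin n) ℝ)
    (ν : Fin n → Fin n → MeasureTheory.SignedMeasure (Set.Icc (-h) (0:ℝ))) : Prop :=
  ∃ M > (0:ℝ), ∃ α > (0:ℝ), ∀ φ x, IsSolution1 h A ν φ x →
    ∀ t ≥ (0:ℝ), ‖x t‖ ≤ M * Real.exp (-α * t) * ‖φ‖

/-! ### Auxiliary lemmas on integrals against signed measures -/

lemma tvar_eq {α : Type*} [MeasurableSpace α] (s : SignedMeasure α) :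
    tvar s = (s.toJordanDecomposition.posPart Set.univ).toReal
      + (s.toJordanDecomposition.negPart Set.univ).toReal := by
  rw [tvar, SignedMeasure.totalVariation, Measure.add_apply, ENNReal.toReal_add] <;>
    simp [measure_ne_top]

lemma tvar_nonneg {α : Type*} [MeasurableSpace α] (s : SignedMeasure α) : 0 ≤ tvar s :=
  ENNReal.toReal_nonneg

lemma sint_bound {α : Type*} [MeasurableSpace α] (s : SignedMeasure α) {f : α → ℝ} {C : ℝ}
    (hCnn : 0 ≤ C) (hC : ∀ θ, |f θ| ≤ C) : |sint s f| ≤ tvar s * C := by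
  rw [sint, tvar_eq]
  calc |(∫ a, f a ∂s.toJordanDecomposition.posPart) - ∫ a, f a ∂s.toJordanDecomposition.negPart|
      ≤ |∫ a, f a ∂s.toJordanDecomposition.posPart| + |∫ a, f a ∂s.toJordanDecomposition.negPart| :=
        abs_sub _ _
    _ ≤ C * (s.toJordanDecomposition.posPart Set.univ).toReal
        + C * (s.toJordanDecomposition.negPart Set.univ).toReal := by
        gcongr <;>
        · rw [← Real.norm_eq_abs]
          exact norm_integral_le_of_norm_le_const (Eventually.of_forall fun θ => by
            rw [Real.norm_eq_abs]; exact hC θ)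
    _ = _ := by ring

lemma jd_of_measure {α : Type*} [MeasurableSpace α] (μ : Measure α) [IsFiniteMeasure μ] :
    (μ.toSignedMeasure).toJordanDecomposition
      = ⟨μ, 0, MeasureTheory.Measure.MutuallySingular.zero_right⟩ := by
  have : μ.toSignedMeasure = (⟨μ, 0,
      MeasureTheory.Measure.MutuallySingular.zero_right⟩ :
      JordanDecomposition α).toSignedMeasure := by
    simp [JordanDecomposition.toSignedMeasure]
  rw [this, JordanDecomposition.toJordanDecomposition_toSignedMeasure]

lemma sint_measure {α : Type*} [MeasurableSpace α] (μ : Measure α) [IsFiniteMeasure μ]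
    (f : α → ℝ) : sint μ.toSignedMeasure f = ∫ a, f a ∂μ := by
  rw [sint, jd_of_measure]
  simp

/-! ### The matrix of exponential moments -/

def Etil (h : ℝ) {n : ℕ} (μ0 : Fin n → Fin n → Measure (Set.Icc (-h) (0:ℝ)))
    (s : ℝ) : Matrix (Fin n) (Fin n) ℝ :=
  Matrix.of fun i j => ∫ θ : Set.Icc (-h) (0:ℝ), Real.exp (max s 0 * (θ:ℝ)) ∂(μ0 i j)

section Etil

variable {h : ℝ} {n : ℕ} {μ0 : Fin n → Fin n → Measure (Set.Icc (-h) (0:ℝ))}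

lemma exp_term_le_one (s : ℝ) (θ : Set.Icc (-h) (0:ℝ)) : Real.exp (max s 0 * (θ:ℝ)) ≤ 1 := by
  rw [Real.exp_le_one_iff]
  exact mul_nonpos_of_nonneg_of_nonpos (le_max_right _ _) θ.2.2

lemma Etil_continuous (hfin : ∀ i j, IsFiniteMeasure (μ0 i j)) (i j : Fin n) :
    Continuous fun s => Etil h μ0 s i j := by
  haveI := hfin i j
  apply continuous_of_dominated (bound := fun _ => (1:ℝ))
  · intro s
    exact Continuous.aestronglyMeasurable
      (Real.continuous_exp.comp (continuous_const.mul continuous_subtype_val))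
  · intro s
    refine Eventually.of_forall fun θ => ?_
    rw [Real.norm_eq_abs, abs_of_pos (Real.exp_pos _)]
    exact exp_term_le_one s θ
  · exact integrable_const 1
  · refine Eventually.of_forall fun θ => ?_
    exact Real.continuous_exp.comp ((continuous_id.max continuous_const).mul continuous_const)

lemma Etil_nonneg (hfin : ∀ i j, IsFiniteMeasure (μ0 i j)) (s : ℝ) (i j : Fin n) :
    0 ≤ Etil h μ0 s i j := by
  haveI := hfin i j
  exact integral_nonneg fun θ => (Real.exp_pos _).le

lemma Etil_le (hfin : ∀ i j, IsFiniteMeasure (μ0 i j)) (s : ℝ) (i j : Fin n) :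
    Etil h μ0 s i j ≤ ((μ0 i j) Set.univ).toReal := by
  haveI := hfin i j
  calc Etil h μ0 s i j ≤ ∫ _θ : Set.Icc (-h) (0:ℝ), (1:ℝ) ∂(μ0 i j) := by
        apply integral_mono_of_nonneg (Eventually.of_forall fun θ => (Real.exp_pos _).le)
          (integrable_const 1) (Eventually.of_forall fun θ => exp_term_le_one s θ)
    _ = ((μ0 i j) Set.univ).toReal := by simp; rfl

lemma Etil_zero (hfin : ∀ i j, IsFiniteMeasure (μ0 i j)) (i j : Fin n) :
    Etil h μ0 0 i j = ((μ0 i j) Set.univ).toReal := by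
  haveI := hfin i j
  simp [Etil]
  rfl

end Etil

/-! ### Extraction of a positive vector from stability -/

section Xi

variable {h : ℝ} {n : ℕ}

lemma ker_trivial (h : ℝ) (hh : 0 < h) (A0 : Matrix (Fin n) (Fin n) ℝ)
    (μ0 : Fin n → Fin n → Measure (Set.Icc (-h) (0:ℝ)))
    (hfin : ∀ i j, IsFiniteMeasure (μ0 i j))
    (hstab0 : ExpStable1 h A0
      (fun i j => @MeasureTheory.Measure.toSignedMeasure _ _ (μ0 i j) (hfin i j)))
    {s : ℝ} (hs : 0 ≤ s) {v : Fin n → ℝ}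
    (hv : (A0 + Etil h μ0 s) *ᵥ v = s • v) : v = 0 := by
  by_contra hv0
  obtain ⟨Mc, hM, α, hα, hbd⟩ := hstab0
  have hvpos : 0 < ‖v‖ := norm_pos_iff.mpr hv0
  set x : ℝ → Fin n → ℝ := fun t => Real.exp (s*t) • v with hxdef
  have hφc : Continuous fun θ : Set.Icc (-h) (0:ℝ) => Real.exp (s*(θ:ℝ)) • v :=
    (Real.continuous_exp.comp (continuous_const.mul continuous_subtype_val)).smul
      continuous_const
  set φ : C(Set.Icc (-h) (0:ℝ), Fin n → ℝ) := ⟨_, hφc⟩ with hφdef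
  have hsol : IsSolution1 h A0
      (fun i j => @MeasureTheory.Measure.toSignedMeasure _ _ (μ0 i j) (hfin i j)) φ x := by
    refine ⟨Continuous.continuousOn (by continuity), fun θ => rfl, fun t ht i => ?_⟩
    have hD : HasDerivAt (fun t => x t i) (Real.exp (s*t) * s * v i) t := by
      have h1 : HasDerivAt (fun t : ℝ => s * t) s t := by
        simpa using (hasDerivAt_id t).const_mul s
      have h2 : HasDerivAt (fun t : ℝ => Real.exp (s * t)) (Real.exp (s*t) * s) t :=
        (Real.hasDerivAt_exp (s*t)).comp t h1
      simpa [hxdef, smul_eq_mul] using h2.mul_const (v i)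
    have hkey : (∑ j, A0 i j * x t j) +
        (∑ j, sint (@MeasureTheory.Measure.toSignedMeasure _ _ (μ0 i j) (hfin i j))
          fun θ => x (t + (θ:ℝ)) j) = Real.exp (s*t) * s * v i := by
      have hsint : ∀ j, (sint (@MeasureTheory.Measure.toSignedMeasure _ _ (μ0 i j) (hfin i j))
          fun θ => x (t + (θ:ℝ)) j) = Real.exp (s*t) * (Etil h μ0 s i j * v j) := by
        intro j
        haveI := hfin i j
        rw [sint_measure]
        have : ∀ θ : Set.Icc (-h) (0:ℝ), x (t + (θ:ℝ)) j
            = (Real.exp (s*t) * v j) * Real.exp (max s 0 * (θ:ℝ)) := by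
          intro θ
          simp only [hxdef, Pi.smul_apply, smul_eq_mul, max_eq_left hs]
          rw [mul_add, Real.exp_add]
          ring
        rw [integral_congr_ae (Eventually.of_forall this), integral_const_mul]
        simp only [Etil, Matrix.of_apply]
        ring
      have e1 : (∑ j, sint (@MeasureTheory.Measure.toSignedMeasure _ _ (μ0 i j) (hfin i j))
          fun θ => x (t + (θ:ℝ)) j) = ∑ j, Real.exp (s*t) * (Etil h μ0 s i j * v j) :=
        Finset.sum_congr rfl fun j _ => hsint j
      rw [e1]
      have hmv := congrFun hv i
      simp only [Matrix.mulVec, dotProduct, Matrix.add_apply, Pi.smul_apply,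
        smul_eq_mul] at hmv
      simp only [hxdef, Pi.smul_apply, smul_eq_mul]
      calc (∑ j, A0 i j * (Real.exp (s*t) * v j))
            + ∑ j, Real.exp (s*t) * (Etil h μ0 s i j * v j)
          = Real.exp (s*t) * (∑ j, (A0 i j + Etil h μ0 s i j) * v j) := by
            rw [Finset.mul_sum, ← Finset.sum_add_distrib]
            congr 1; funext j; ring
        _ = Real.exp (s*t) * (s * v i) := by rw [hmv]
        _ = Real.exp (s*t) * s * v i := by ring
    exact hkey ▸ hD.hasDerivWithinAt
  have hφle : ‖φ‖ ≤ ‖v‖ := by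
    refine (ContinuousMap.norm_le _ (norm_nonneg v)).mpr fun θ => ?_
    have : ‖φ θ‖ = Real.exp (s*(θ:ℝ)) * ‖v‖ := by
      rw [hφdef]
      simp [norm_smul, Real.norm_eq_abs, abs_of_pos (Real.exp_pos _)]
    rw [this]
    have : Real.exp (s*(θ:ℝ)) ≤ 1 := by
      rw [Real.exp_le_one_iff]
      exact mul_nonpos_of_nonneg_of_nonpos hs θ.2.2
    nlinarith [norm_nonneg v]
  have hcontr : ∀ t ≥ (0:ℝ), (1:ℝ) ≤ Mc * Real.exp (-α * t) := by
    intro t ht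
    have h1 : ‖v‖ ≤ ‖x t‖ := by
      have : ‖x t‖ = Real.exp (s*t) * ‖v‖ := by
        simp [hxdef, norm_smul, Real.norm_eq_abs, abs_of_pos (Real.exp_pos _)]
      rw [this]
      nlinarith [Real.one_le_exp (mul_nonneg hs ht), norm_nonneg v]
    have h2 := hbd φ x hsol t ht
    have h3 : ‖v‖ ≤ Mc * Real.exp (-α * t) * ‖v‖ := by
      refine h1.trans (h2.trans ?_)
      have : 0 < Mc * Real.exp (-α * t) := by positivity
      nlinarith
    nlinarith
  have hlim : Tendsto (fun t : ℝ => Mc * Real.exp (-α * t)) atTop (nhds 0) := by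
    have h1 : Tendsto (fun t : ℝ => -α * t) atTop atBot := by
      apply Filter.Tendsto.const_mul_atTop_of_neg (neg_neg_iff_pos.mpr hα) tendsto_id
    have := Real.tendsto_exp_atBot.comp h1
    simpa using this.const_mul Mc
  have : (1:ℝ) ≤ 0 := ge_of_tendsto hlim <|
    (eventually_ge_atTop (0:ℝ)).mono fun t ht => hcontr t ht
  linarith

end Xi

lemma exists_xi (h : ℝ) (hh : 0 < h) (A0 : Matrix (Fin n) (Fin n) ℝ)
    (hA0 : ∀ i j, i ≠ j → 0 ≤ A0 i j)
    (μ0 : Fin n → Fin n → Measure (Set.Icc (-h) (0:ℝ)))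
    (hfin : ∀ i j, IsFiniteMeasure (μ0 i j))
    (hstab0 : ExpStable1 h A0
      (fun i j => @MeasureTheory.Measure.toSignedMeasure _ _ (μ0 i j) (hfin i j))) :
    ∃ ξ : Fin n → ℝ, (∀ i, 0 < ξ i) ∧
      ∀ i, (∑ j, A0 i j * ξ j) + ∑ j, ((μ0 i j) Set.univ).toReal * ξ j = -1 := by
  classical
  set G : ℝ → Matrix (Fin n) (Fin n) ℝ :=
    fun s => s • (1 : Matrix (Fin n) (Fin n) ℝ) - (A0 + Etil h μ0 s) with hG
  have hdet : ∀ s, 0 ≤ s → (G s).det ≠ 0 := by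
    intro s hs hd
    obtain ⟨v, hvne, hv⟩ := (Matrix.exists_mulVec_eq_zero_iff).mpr hd
    apply hvne
    apply ker_trivial h hh A0 μ0 hfin hstab0 hs
    have h2 : s • v - (A0 + Etil h μ0 s) *ᵥ v = 0 := by
      have := hv
      rwa [hG, Matrix.sub_mulVec, Matrix.smul_mulVec, Matrix.one_mulVec] at this
    exact (sub_eq_zero.mp h2).symm
  set ξf : ℝ → Fin n → ℝ :=
    fun s => ((G s).det)⁻¹ • ((G s).adjugate *ᵥ fun _ => (1:ℝ)) with hξf
  have hGinv : ∀ s, 0 ≤ s → G s *ᵥ ξf s = fun _ => (1:ℝ) := by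
    intro s hs
    have hu : IsUnit (G s).det := isUnit_iff_ne_zero.mpr (hdet s hs)
    have h1 : ξf s = (G s)⁻¹ *ᵥ (fun _ => (1:ℝ)) := by
      rw [hξf, Matrix.inv_def, Ring.inverse_eq_inv', Matrix.smul_mulVec]
    rw [h1, Matrix.mulVec_mulVec, Matrix.mul_nonsing_inv _ hu, Matrix.one_mulVec]
  have hrow : ∀ s, 0 ≤ s → ∀ i,
      s * ξf s i - (∑ j, (A0 i j + Etil h μ0 s i j) * ξf s j) = 1 := by
    intro s hs i
    have h1 := congrFun (hGinv s hs) i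
    simp only [Matrix.mulVec, dotProduct, hG, Matrix.sub_apply, Matrix.add_apply,
      Matrix.smul_apply, Matrix.one_apply, smul_eq_mul, mul_ite, mul_one, mul_zero,
      sub_mul, Finset.sum_sub_distrib, ite_mul, zero_mul, Finset.sum_ite_eq,
      Finset.mem_univ, if_true] at h1
    exact h1
  have hpos : ∀ s, 0 ≤ s → (∀ i, 0 ≤ ξf s i) → ∀ i, 0 < ξf s i := by
    intro s hs hnn i
    rcases (hnn i).lt_or_eq with hlt | heq
    · exact hlt
    · exfalso
      have h1 := hrow s hs i
      rw [← heq, mul_zero, zero_sub] at h1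
      have hsum : 0 ≤ ∑ j, (A0 i j + Etil h μ0 s i j) * ξf s j := by
        apply Finset.sum_nonneg
        intro j _
        rcases eq_or_ne j i with rfl | hji
        · rw [← heq, mul_zero]
        · exact mul_nonneg (add_nonneg (hA0 i j (Ne.symm hji)) (Etil_nonneg hfin s i j)) (hnn j)
      linarith
  rcases Nat.eq_zero_or_pos n with hn | hn
  · subst hn
    exact ⟨0, fun i => i.elim0, fun i => i.elim0⟩
  set Cb : ℝ := (∑ i, ∑ j, (|A0 i j| + ((μ0 i j) Set.univ).toReal)) + 1 with hCb
  have hCb1 : 1 ≤ Cb := by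
    have : (0:ℝ) ≤ ∑ i, ∑ j, (|A0 i j| + ((μ0 i j) Set.univ).toReal) :=
      Finset.sum_nonneg fun i _ => Finset.sum_nonneg fun j _ =>
        add_nonneg (abs_nonneg _) ENNReal.toReal_nonneg
    linarith
  have hCoef : ∀ s, ∀ i, ∑ j, |A0 i j + Etil h μ0 s i j| ≤ Cb - 1 := by
    intro s i
    have h1 : ∑ j, |A0 i j + Etil h μ0 s i j|
        ≤ ∑ j, (|A0 i j| + ((μ0 i j) Set.univ).toReal) := by
      apply Finset.sum_le_sum
      intro j _
      refine (abs_add_le _ _).trans ?_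
      gcongr
      rw [abs_of_nonneg (Etil_nonneg hfin s i j)]
      exact Etil_le hfin s i j
    refine h1.trans ?_
    have h2 : ∑ j, (|A0 i j| + ((μ0 i j) Set.univ).toReal)
        ≤ ∑ i, ∑ j, (|A0 i j| + ((μ0 i j) Set.univ).toReal) := by
      apply Finset.single_le_sum (f := fun i => ∑ j, (|A0 i j| + ((μ0 i j) Set.univ).toReal))
        (fun i _ => Finset.sum_nonneg fun j _ =>
          add_nonneg (abs_nonneg _) ENNReal.toReal_nonneg) (Finset.mem_univ i)
    linarith
  have hbig : ∀ s, 2*Cb + 1 ≤ s → ∀ i, 0 < ξf s i := by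
    intro s hsbig i
    have hs : (0:ℝ) ≤ s := by linarith
    have hmnn : 0 ≤ ‖ξf s‖ := norm_nonneg _
    have hmpos : 0 < ‖ξf s‖ := by
      rcases hmnn.lt_or_eq with hlt | heq
      · exact hlt
      · exfalso
        have hz : ξf s = 0 := norm_eq_zero.mp heq.symm
        have h1 := hrow s hs i
        rw [hz] at h1
        simp at h1
    have hdot : ∀ i', |∑ j, (A0 i' j + Etil h μ0 s i' j) * ξf s j| ≤ (Cb - 1) * ‖ξf s‖ := by
      intro i'
      calc |∑ j, (A0 i' j + Etil h μ0 s i' j) * ξf s j|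
          ≤ ∑ j, |(A0 i' j + Etil h μ0 s i' j) * ξf s j| := Finset.abs_sum_le_sum_abs _ _
        _ ≤ ∑ j, |A0 i' j + Etil h μ0 s i' j| * ‖ξf s‖ := by
            apply Finset.sum_le_sum
            intro j _
            rw [abs_mul]
            exact mul_le_mul_of_nonneg_left (norm_le_pi_norm (ξf s) j) (abs_nonneg _)
        _ = (∑ j, |A0 i' j + Etil h μ0 s i' j|) * ‖ξf s‖ := by rw [Finset.sum_mul]
        _ ≤ (Cb - 1) * ‖ξf s‖ := mul_le_mul_of_nonneg_right (hCoef s i') hmnn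
    have hsm : s * ‖ξf s‖ ≤ 1 + (Cb - 1) * ‖ξf s‖ := by
      have hC0 : (0:ℝ) ≤ (1 + (Cb - 1) * ‖ξf s‖) / s := by
        apply div_nonneg _ hs
        nlinarith
      have hle : ‖ξf s‖ ≤ (1 + (Cb - 1) * ‖ξf s‖) / s := by
        rw [pi_norm_le_iff_of_nonneg hC0]
        intro i'
        rw [Real.norm_eq_abs, le_div_iff₀ (by linarith : (0:ℝ) < s)]
        have h1 := hrow s hs i'
        have h2 := hdot i'
        have key : s * ξf s i' = 1 + ∑ j, (A0 i' j + Etil h μ0 s i' j) * ξf s j := by linarith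
        have habs : |ξf s i'| * s = |s * ξf s i'| := by
          rw [abs_mul, abs_of_nonneg hs]; ring
        rw [habs, key]
        calc |1 + ∑ j, (A0 i' j + Etil h μ0 s i' j) * ξf s j|
            ≤ |(1:ℝ)| + |∑ j, (A0 i' j + Etil h μ0 s i' j) * ξf s j| := abs_add_le _ _
          _ ≤ 1 + (Cb - 1) * ‖ξf s‖ := by rw [abs_one]; linarith
      calc s * ‖ξf s‖ ≤ s * ((1 + (Cb - 1) * ‖ξf s‖) / s) :=
            mul_le_mul_of_nonneg_left hle hs
        _ = 1 + (Cb - 1) * ‖ξf s‖ := by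
            have hs' : s ≠ 0 := ne_of_gt (show (0:ℝ) < s by linarith)
            field_simp
    -- now conclude positivity
    have h1 := hrow s hs i
    have h2 := hdot i
    -- s * ξf s i = 1 + dot ≥ 1 - (Cb-1)m ≥ 3m > 0
    have h3 : ‖ξf s‖ * (Cb + 2) ≤ 1 := by
      nlinarith [mul_le_mul_of_nonneg_right hsbig hmnn]
    have habs : -((Cb-1) * ‖ξf s‖) ≤ ∑ j, (A0 i j + Etil h μ0 s i j) * ξf s j :=
      neg_le_of_abs_le h2
    have h4 : 3 * ‖ξf s‖ ≤ s * ξf s i := by nlinarith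
    by_contra hle
    have h5 : s * ξf s i ≤ 0 :=
      mul_nonpos_of_nonneg_of_nonpos (by linarith) (le_of_not_gt hle)
    linarith
  -- continuity of ξf at nonnegative points
  have hGc : Continuous G := by
    apply continuous_matrix
    intro a b
    have : (fun t => G t a b)
        = fun t => t * (1 : Matrix (Fin n) (Fin n) ℝ) a b - (A0 a b + Etil h μ0 t a b) := rfl
    rw [this]
    exact (continuous_id.mul continuous_const).sub
      (continuous_const.add (Etil_continuous hfin a b))
  have hcont : ∀ s, 0 ≤ s → ∀ i, ContinuousAt (fun t => ξf t i) s := by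
    intro s hs i
    have hdc : Continuous fun t => (G t).det := hGc.matrix_det
    have hac : Continuous fun t => ((G t).adjugate *ᵥ fun _ => (1:ℝ)) i := by
      simp only [Matrix.mulVec, dotProduct]
      exact continuous_finset_sum _ fun j _ =>
        (hGc.matrix_adjugate.matrix_elem i j).mul continuous_const
    have : (fun t => ξf t i) = fun t => ((G t).det)⁻¹ * ((G t).adjugate *ᵥ fun _ => (1:ℝ)) i :=
      rfl
    rw [this]
    exact ((hdc.continuousAt.inv₀ (hdet s hs)).mul hac.continuousAt)
  -- the continuation argument
  set S0 : ℝ := 2*Cb + 1 with hS0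
  have hS0nn : (0:ℝ) ≤ S0 := by linarith
  set T : Set ℝ := {s | s ∈ Set.Icc 0 S0 ∧ ∀ t ∈ Set.Icc s S0, ∀ i, 0 < ξf t i} with hT
  have hS0T : S0 ∈ T := by
    refine ⟨⟨hS0nn, le_refl _⟩, fun t ht i => ?_⟩
    have : t = S0 := le_antisymm ht.2 ht.1
    rw [this]
    exact hbig S0 le_rfl i
  have hTne : T.Nonempty := ⟨S0, hS0T⟩
  have hTbdd : BddBelow T := ⟨0, fun t ht => ht.1.1⟩
  set s0 := sInf T with hs0def
  have hs0nn : 0 ≤ s0 := le_csInf hTne fun t ht => ht.1.1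
  have hs0le : s0 ≤ S0 := csInf_le hTbdd hS0T
  have hup : ∀ t, s0 < t → t ≤ S0 → ∀ i, 0 < ξf t i := by
    intro t hlt hle i
    obtain ⟨u, huT, hut⟩ := exists_lt_of_csInf_lt hTne hlt
    exact huT.2 t ⟨hut.le, hle⟩ i
  have hs0nng : ∀ i, 0 ≤ ξf s0 i := by
    intro i
    rcases eq_or_lt_of_le hs0le with heq | hlt
    · rw [heq]; exact (hbig S0 le_rfl i).le
    · have hc := (hcont s0 hs0nn i).tendsto.mono_left (nhdsWithin_le_nhds (s := Set.Ioi s0))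
      refine ge_of_tendsto hc ?_
      filter_upwards [Ioo_mem_nhdsGT_of_mem ⟨le_refl s0, hlt⟩] with t ht
      exact (hup t ht.1 ht.2.le i).le
  have hs0pos : ∀ i, 0 < ξf s0 i := hpos s0 hs0nn hs0nng
  have hs00 : s0 = 0 := by
    by_contra hne
    have hs0p : 0 < s0 := lt_of_le_of_ne hs0nn (Ne.symm hne)
    have hev : ∀ᶠ t in nhds s0, ∀ i, 0 < ξf t i := by
      rw [eventually_all]
      intro i
      exact (hcont s0 hs0nn i).tendsto (Ioi_mem_nhds (hs0pos i))
    obtain ⟨δ, hδ, hball⟩ := Metric.eventually_nhds_iff.mp hev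
    set s1 : ℝ := max (s0 - δ/2) (s0/2) with hs1def
    have hs1nn : 0 ≤ s1 := le_trans (by linarith) (le_max_right _ _)
    have hs1lt : s1 < s0 := max_lt (by linarith) (by linarith)
    have hs1T : s1 ∈ T := by
      refine ⟨⟨hs1nn, by linarith⟩, fun t ht i => ?_⟩
      rcases le_or_gt s0 t with hts | hts
      · rcases eq_or_lt_of_le hts with heq | hlt'
        · rw [← heq]; exact hs0pos i
        · exact hup t hlt' ht.2 i
      · apply hball
        rw [Real.dist_eq, abs_of_nonpos (by linarith)]
        have : s0 - δ/2 ≤ s1 := le_max_left _ _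
        have h2 : s0 - δ/2 ≤ t := le_trans this ht.1
        linarith
    have := csInf_le hTbdd hs1T
    linarith
  refine ⟨ξf s0, hs0pos, fun i => ?_⟩
  have h1 := hrow s0 hs0nn i
  rw [hs00] at h1 ⊢
  rw [zero_mul, zero_sub] at h1
  have h2 : ∑ j, (A0 i j + Etil h μ0 0 i j) * ξf 0 j
      = (∑ j, A0 i j * ξf 0 j) + ∑ j, ((μ0 i j) Set.univ).toReal * ξf 0 j := by
    rw [← Finset.sum_add_distrib]
    apply Finset.sum_congr rfl
    intro j _
    rw [Etil_zero hfin]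
    ring
  linarith

set_option maxHeartbeats 2000000 in
/-- Corollary (sets of switched systems): let `(A₀, μ₀)` be a positive linear delay system
(`A₀` Metzler, `μ₀` a matrix of finite nonnegative Borel measures) which is exponentially
stable. Then every time-delay switched linear system `(A, ν)` whose data satisfy, entrywise,
`M(A⁰_k) ≤ A₀` and `V(ν_k) ≤ V(μ₀)` for every `k`, is exponentially stable under arbitrary
switching. -/
theorem expStableSw_of_dominated_by_stable_positive {N n : ℕ} (h : ℝ) (hh : 0 < h)
    (A0 : Matrix (Fin n) (Fin n) ℝ) (hA0 : ∀ i j, i ≠ j → 0 ≤ A0 i j)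
    (μ0 : Fin n → Fin n → MeasureTheory.Measure (Set.Icc (-h) (0:ℝ)))
    (hfin : ∀ i j, MeasureTheory.IsFiniteMeasure (μ0 i j))
    (hstab0 : ExpStable1 h A0
      (fun i j => @MeasureTheory.Measure.toSignedMeasure _ _ (μ0 i j) (hfin i j)))
    (A : Fin N → Matrix (Fin n) (Fin n) ℝ)
    (ν : Fin N → Fin n → Fin n → MeasureTheory.SignedMeasure (Set.Icc (-h) (0:ℝ)))
    (hdomA : ∀ k i j, metz (A k) i j ≤ A0 i j)
    (hdomV : ∀ k i j, tvar (ν k i j) ≤ ((μ0 i j) Set.univ).toReal) :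
    ExpStableSw h A ν := by
  rcases Nat.eq_zero_or_pos n with hn | hn
  · subst hn
    refine ⟨1, one_pos, 1, one_pos, fun σ hσ φ x hsol t ht => ?_⟩
    have hx0 : x t = 0 := Subsingleton.elim _ _
    rw [hx0, norm_zero]
    positivity
  obtain ⟨ξ, hξpos, hξrow⟩ := exists_xi h hh A0 hA0 μ0 hfin hstab0
  haveI : Nonempty (Fin n) := Fin.pos_iff_nonempty.mp hn
  have hne : (Finset.univ : Finset (Fin n)).Nonempty := Finset.univ_nonempty
  set ξmin := Finset.univ.inf' hne ξ with hξmindef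
  set ξmax := Finset.univ.sup' hne ξ with hξmaxdef
  have hξminpos : 0 < ξmin := (Finset.lt_inf'_iff hne).mpr fun i _ => hξpos i
  have hξminle : ∀ i, ξmin ≤ ξ i := fun i => Finset.inf'_le _ (Finset.mem_univ i)
  have hξlemax : ∀ i, ξ i ≤ ξmax := fun i => Finset.le_sup' _ (Finset.mem_univ i)
  have hξmaxpos : 0 < ξmax := lt_of_lt_of_le (hξpos (Classical.arbitrary _)) (hξlemax _)
  set Sv : Fin n → ℝ := fun i => ∑ j, ((μ0 i j) Set.univ).toReal * ξ j with hSvdef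
  have hSvnn : ∀ i, 0 ≤ Sv i := fun i => Finset.sum_nonneg fun j _ =>
    mul_nonneg ENNReal.toReal_nonneg (hξpos j).le
  set K2 := Finset.univ.sup' hne Sv with hK2def
  have hK2 : ∀ i, Sv i ≤ K2 := fun i => Finset.le_sup' _ (Finset.mem_univ i)
  have hK2nn : 0 ≤ K2 := le_trans (hSvnn (Classical.arbitrary _)) (hK2 _)
  set β := min (1/(4*ξmax)) (Real.log (1 + 1/(4*(K2+1))) / h) with hβdef
  have hargpos : 1 < 1 + 1/(4*(K2+1)) := by
    have : (0:ℝ) < 1/(4*(K2+1)) := by positivity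
    linarith
  have hβpos : 0 < β := lt_min (by positivity) (div_pos (Real.log_pos hargpos) hh)
  have hβkey : ∀ i, β * ξ i + (∑ j, A0 i j * ξ j) + Real.exp (β*h) * Sv i ≤ -(1/2 : ℝ) := by
    intro i
    have h1 : β * ξ i ≤ 1/4 := by
      have hb1 : β ≤ 1/(4*ξmax) := min_le_left _ _
      calc β * ξ i ≤ (1/(4*ξmax)) * ξmax :=
            mul_le_mul hb1 (hξlemax i) (hξpos i).le (by positivity)
        _ = 1/4 := by field_simp
    have h2 : Real.exp (β*h) * Sv i ≤ Sv i + 1/4 := by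
      have hβh : β * h ≤ Real.log (1 + 1/(4*(K2+1))) := by
        have hb2 : β ≤ Real.log (1 + 1/(4*(K2+1)))/h := min_le_right _ _
        rw [le_div_iff₀ hh] at hb2
        exact hb2
      have hexp : Real.exp (β*h) ≤ 1 + 1/(4*(K2+1)) :=
        (Real.exp_le_exp.mpr hβh).trans_eq (Real.exp_log (by linarith))
      have h3 : Real.exp (β*h) * Sv i ≤ (1 + 1/(4*(K2+1))) * Sv i :=
        mul_le_mul_of_nonneg_right hexp (hSvnn i)
      have h4 : (1/(4*(K2+1))) * Sv i ≤ 1/4 := by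
        rw [div_mul_eq_mul_div, one_mul, div_le_div_iff₀ (by nlinarith [hK2nn] : (0:ℝ) < 4*(K2+1)) (by norm_num : (0:ℝ) < 4)]
        nlinarith [hK2 i, hSvnn i, hK2nn]
      nlinarith [hSvnn i]
    have h3 := hξrow i
    linarith
  refine ⟨ξmax/ξmin, by positivity, β, hβpos, fun σ hσ φ x hsol t ht => ?_⟩
  obtain ⟨hxc, hinit, hderiv⟩ := hsol
  obtain ⟨hσ0, d, hd, τ, hτ0, hτd, hτconst⟩ := hσ
  set c := ‖φ‖/ξmin with hcdef
  have hcnn : 0 ≤ c := by positivity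
  have hcξ : ∀ i, ‖φ‖ ≤ c * ξ i := by
    intro i
    rw [hcdef, div_mul_eq_mul_div, le_div_iff₀ hξminpos]
    exact mul_le_mul_of_nonneg_left (hξminle i) (norm_nonneg (φ : C(_,_)))
  have hτnn : ∀ k, 0 ≤ τ k := by
    intro k
    induction k with
    | zero => rw [hτ0]
    | succ k ih => have := hτd k; linarith
  have hτbig : ∀ k : ℕ, (k:ℝ) * d ≤ τ k := by
    intro k
    induction k with
    | zero => simp [hτ0]
    | succ k ih => have := hτd k; push_cast; linarith
  have hinitbound : ∀ u, -h ≤ u → u ≤ 0 → ∀ i, |x u i| ≤ ‖φ‖ := by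
    intro u h1 h2 i
    have hmem : u ∈ Set.Icc (-h) (0:ℝ) := ⟨h1, h2⟩
    have hval : x u = φ ⟨u, hmem⟩ := hinit ⟨u, hmem⟩
    rw [hval]
    calc |φ ⟨u,hmem⟩ i| ≤ ‖φ ⟨u,hmem⟩‖ := by
          rw [← Real.norm_eq_abs]; exact norm_le_pi_norm _ i
      _ ≤ ‖φ‖ := ContinuousMap.norm_coe_le_norm φ _
  have hxcomp : ∀ j, ContinuousOn (fun u => x u j) (Set.Ici (-h)) := fun j =>
    (continuous_apply j).comp_continuousOn hxc
  -- the key epsilon-claim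
  have hmain : ∀ ε > (0:ℝ), ∀ u, 0 ≤ u → ∀ i, |x u i| < (c+ε) * ξ i * Real.exp (-β*u) := by
    intro ε hε
    by_contra hcon
    push_neg at hcon
    obtain ⟨u0, hu0, i0, hi0⟩ := hcon
    set B : ℝ → Fin n → ℝ := fun u i => (c+ε) * ξ i * Real.exp (-β*u) with hB
    have hBpos : ∀ u i, 0 < B u i := fun u i => by
      simp only [hB]
      exact mul_pos (mul_pos (by linarith) (hξpos i)) (Real.exp_pos _)
    have hBcont : ∀ j, Continuous fun u => B u j := by
      intro j
      simp only [hB]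
      exact continuous_const.mul (Real.continuous_exp.comp (continuous_const.mul continuous_id))
    set S : Set ℝ := {u | 0 ≤ u ∧ ∃ i, B u i ≤ |x u i|} with hS
    have hSne : S.Nonempty := ⟨u0, hu0, i0, hi0⟩
    have hSbdd : BddBelow S := ⟨0, fun v hv => hv.1⟩
    have hSclosed : IsClosed S := by
      have hSi : ∀ i, IsClosed {u : ℝ | 0 ≤ u ∧ B u i ≤ |x u i|} := by
        intro i
        have hf : ContinuousOn (fun u => B u i - |x u i|) (Set.Ici (0:ℝ)) := by
          apply ContinuousOn.sub ((hBcont i).continuousOn)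
          exact ((hxcomp i).mono fun u (hu : u ∈ Set.Ici (0:ℝ)) =>
              Set.mem_Ici.mpr (le_trans (by linarith) (Set.mem_Ici.mp hu))).abs
        have hcl := hf.preimage_isClosed_of_isClosed isClosed_Ici (isClosed_Iic (a := (0:ℝ)))
        convert hcl using 1
        ext u
        simp only [Set.mem_setOf_eq, Set.mem_inter_iff, Set.mem_Ici, Set.mem_preimage,
          Set.mem_Iic]
        constructor
        · rintro ⟨h1, h2⟩; exact ⟨h1, by linarith⟩
        · rintro ⟨h1, h2⟩; exact ⟨h1, by linarith⟩
      have hrw : S = ⋃ i, {u : ℝ | 0 ≤ u ∧ B u i ≤ |x u i|} := by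
        ext u
        simp only [hS, Set.mem_setOf_eq, Set.mem_iUnion]
        constructor
        · rintro ⟨h1, i, h2⟩; exact ⟨i, h1, h2⟩
        · rintro ⟨i, h1, h2⟩; exact ⟨h1, i, h2⟩
      rw [hrw]
      exact isClosed_iUnion_of_finite hSi
    set tstar := sInf S with htstardef
    have htS : tstar ∈ S := hSclosed.csInf_mem hSne hSbdd
    obtain ⟨htnn, i, hi⟩ := htS
    have hlow : ∀ u, 0 ≤ u → u < tstar → ∀ j, |x u j| < B u j := by
      intro u hu hut j
      by_contra hge
      push_neg at hge
      exact absurd (csInf_le hSbdd ⟨hu, j, hge⟩) (not_le.mpr hut)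
    have hhist : ∀ u, -h ≤ u → u < tstar → ∀ j, |x u j| ≤ B u j := by
      intro u h1 h2 j
      rcases le_or_gt 0 u with hu | hu
      · exact (hlow u hu h2 j).le
      · have hib := hinitbound u h1 hu.le j
        refine hib.trans ((hcξ j).trans ?_)
        have he1 : 1 ≤ Real.exp (-β*u) :=
          Real.one_le_exp (by linarith [mul_pos hβpos (neg_pos.mpr hu)] : (0:ℝ) ≤ -β*u)
        simp only [hB]
        linarith [mul_le_mul_of_nonneg_left he1
          (mul_nonneg (add_nonneg hcnn hε.le) (hξpos j).le), mul_pos hε (hξpos j)]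
    have htpos : 0 < tstar := by
      rcases htnn.lt_or_eq with hp | heq
      · exact hp
      · exfalso
        have h1 := hinitbound 0 (by linarith) le_rfl i
        have h2 := hcξ i
        rw [← heq] at hi
        have h3 : B 0 i = (c+ε) * ξ i := by simp [hB]
        linarith [mul_pos hε (hξpos i)]
    have hXle : ∀ j, |x tstar j| ≤ B tstar j := by
      intro j
      have hmemI : tstar ∈ Set.Ici (-h) := by
        simp only [Set.mem_Ici]; linarith
      have hcw0 : ContinuousWithinAt (fun u => |x u j| - B u j) (Set.Ici (-h)) tstar :=
        ((hxcomp j) tstar hmemI).abs.sub ((hBcont j).continuousWithinAt)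
      have hcw : ContinuousWithinAt (fun u => |x u j| - B u j) (Set.Iio tstar) tstar :=
        hcw0.mono_of_mem_nhdsWithin (mem_nhdsWithin_of_mem_nhds (Ici_mem_nhds (by linarith : -h < tstar)))
      have hev : ∀ᶠ u in nhdsWithin tstar (Set.Iio tstar), |x u j| - B u j ≤ 0 := by
        filter_upwards [Ioo_mem_nhdsLT_of_mem (⟨htpos, le_rfl⟩ : tstar ∈ Set.Ioc 0 tstar)]
          with u hu
        have := hlow u hu.1.le hu.2 j
        linarith
      have hle := le_of_tendsto hcw.tendsto hev
      linarith
    have hXeq : |x tstar i| = B tstar i := le_antisymm (hXle i) hi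
    -- locate the mode interval
    have hkex : ∃ k : ℕ, tstar ≤ τ (k+1) := by
      obtain ⟨k, hk⟩ := exists_nat_ge (tstar/d)
      refine ⟨k, ?_⟩
      have h1 : tstar ≤ (k:ℝ) * d := by
        rw [div_le_iff₀ hd] at hk
        exact hk
      have h2 := hτbig k
      have h3 := hτd k
      linarith
    set k0 := Nat.find hkex with hk0def
    have hk1 : tstar ≤ τ (k0+1) := Nat.find_spec hkex
    have hk2 : τ k0 < tstar := by
      rcases Nat.eq_zero_or_pos k0 with h0 | h0
      · rw [h0, hτ0]; exact htpos
      · obtain ⟨m, hm⟩ := Nat.exists_eq_succ_of_ne_zero (Nat.pos_iff_ne_zero.mp h0)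
        have hmin : ¬ tstar ≤ τ (m+1) :=
          Nat.find_min hkex (show m < Nat.find hkex by rw [← hk0def, hm]; exact Nat.lt_succ_self m)
        rw [hm]
        exact not_le.mp hmin
    set m0 := σ (τ k0) with hm0def
    have hmode : ∀ u, τ k0 < u → u < τ (k0+1) → (∀ᶠ v in nhds u, σ v = σ u) ∧ σ u = m0 := by
      intro u h1 h2
      have hu : σ u = m0 := hτconst k0 u ⟨h1.le, h2⟩
      refine ⟨?_, hu⟩
      filter_upwards [Ioo_mem_nhds h1 h2] with v hv
      rw [hτconst k0 v ⟨hv.1.le, hv.2⟩, hu]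
    -- sign
    have hxne : x tstar i ≠ 0 := by
      intro h0
      rw [h0, abs_zero] at hXeq
      exact (hBpos tstar i).ne' hXeq.symm
    set sg : ℝ := if 0 < x tstar i then 1 else -1 with hsgdef
    have hsgy : ∀ y : ℝ, sg * y ≤ |y| := by
      intro y
      rw [hsgdef]
      split_ifs
      · rw [one_mul]; exact le_abs_self y
      · rw [neg_one_mul]; exact neg_le_abs y
    have hsgx : sg * x tstar i = |x tstar i| := by
      rw [hsgdef]
      rcases lt_trichotomy 0 (x tstar i) with hp | he | hng
      · rw [if_pos hp, one_mul, abs_of_pos hp]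
      · exact absurd he.symm hxne
      · rw [if_neg (by linarith), neg_one_mul, abs_of_neg hng]
    set a := (τ k0 + tstar)/2 with hadef
    have haτ : τ k0 < a := by rw [hadef]; linarith
    have hat : a < tstar := by rw [hadef]; linarith
    have hann : 0 ≤ a := le_trans (hτnn k0) haτ.le
    set K := |A m0 i i| with hKdef
    have hKnn : 0 ≤ K := abs_nonneg _
    set w : ℝ → ℝ := fun u => (sg * x u i - B u i) * Real.exp (K*u) with hwdef
    set D : ℝ → ℝ := fun u => (∑ j, A (σ u) i j * x u j) +
        ∑ j, sint (ν (σ u) i j) fun θ => x (u + (θ:ℝ)) j with hDdef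
    set w' : ℝ → ℝ := fun u =>
      ((sg * D u - (c+ε) * ξ i * (-β * Real.exp (-β*u))) * Real.exp (K*u))
        + (sg * x u i - B u i) * (K * Real.exp (K*u)) with hw'def
    have hIccsub : Set.Icc a tstar ⊆ Set.Ici (-h) := fun u hu => by
      simp only [Set.mem_Ici]
      have := hu.1
      linarith
    have hwcont : ContinuousOn w (Set.Icc a tstar) := by
      simp only [hwdef]
      apply ContinuousOn.mul
      · exact (continuousOn_const.mul ((hxcomp i).mono hIccsub)).sub
          ((hBcont i).continuousOn)
      · exact (Real.continuous_exp.comp (continuous_const.mul continuous_id)).continuousOn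
    have hderivu : ∀ u ∈ Set.Ico a tstar, HasDerivWithinAt w (w' u) (Set.Ici u) u := by
      intro u hu
      have h0u : 0 ≤ u := le_trans hann hu.1
      have hu1 : τ k0 < u := lt_of_lt_of_le haτ hu.1
      have hu2 : u < τ (k0+1) := lt_of_lt_of_le hu.2 hk1
      obtain ⟨hev, hσu⟩ := hmode u hu1 hu2
      have hx' : HasDerivWithinAt (fun v => x v i) (D u) (Set.Ici u) u := by
        simp only [hDdef]
        exact hderiv u h0u hev i
      have hB' : HasDerivAt (fun v => B v i) ((c+ε) * ξ i * (-β * Real.exp (-β*u))) u := by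
        simp only [hB]
        have h1 : HasDerivAt (fun v : ℝ => -β * v) (-β) u := by
          simpa using (hasDerivAt_id u).const_mul (-β)
        have h2 : HasDerivAt (fun v : ℝ => Real.exp (-β*v)) (Real.exp (-β*u) * (-β)) u :=
          (Real.hasDerivAt_exp (-β*u)).comp u h1
        have h3 := h2.const_mul ((c+ε) * ξ i)
        exact h3.congr_deriv (by ring)
      have hK' : HasDerivAt (fun v : ℝ => Real.exp (K*v)) (K * Real.exp (K*u)) u := by
        have h1 : HasDerivAt (fun v : ℝ => K * v) K u := by
          simpa using (hasDerivAt_id u).const_mul K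
        have h2 := (Real.hasDerivAt_exp (K*u)).comp u h1
        exact h2.congr_deriv (by ring)
      have hcomb := ((hx'.const_mul sg).sub hB'.hasDerivWithinAt).mul hK'.hasDerivWithinAt
      exact hcomb
    have hbound : ∀ u ∈ Set.Ico a tstar, w' u ≤ 0 := by
      intro u hu
      have h0u : 0 ≤ u := le_trans hann hu.1
      have hu1 : τ k0 < u := lt_of_lt_of_le haτ hu.1
      have hu2 : u < τ (k0+1) := lt_of_lt_of_le hu.2 hk1
      obtain ⟨hev, hσu⟩ := hmode u hu1 hu2
      have hgle : sg * x u i - B u i ≤ 0 := by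
        have h1 := hlow u h0u hu.2 i
        have h2 := hsgy (x u i)
        linarith
      have hterm1 : ∀ j, j ≠ i → sg * (A m0 i j * x u j) ≤ A0 i j * B u j := by
        intro j hj
        have hmab : |A m0 i j| ≤ A0 i j := by
          have := hdomA m0 i j
          rwa [metz, Matrix.of_apply, if_neg (Ne.symm hj)] at this
        calc sg * (A m0 i j * x u j) ≤ |A m0 i j * x u j| := hsgy _
          _ = |A m0 i j| * |x u j| := abs_mul _ _
          _ ≤ A0 i j * |x u j| := mul_le_mul_of_nonneg_right hmab (abs_nonneg _)
          _ ≤ A0 i j * B u j :=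
              mul_le_mul_of_nonneg_left (hlow u h0u hu.2 j).le (hA0 i j (Ne.symm hj))
      have hterm1i : sg * (A m0 i i * x u i)
          ≤ A0 i i * B u i + K * (-(sg * x u i - B u i)) := by
        have he : sg * (A m0 i i * x u i)
            = A m0 i i * B u i + A m0 i i * (sg * x u i - B u i) := by ring
        rw [he]
        have h3 : A m0 i i * B u i ≤ A0 i i * B u i := by
          apply mul_le_mul_of_nonneg_right ?_ (hBpos u i).le
          have := hdomA m0 i i
          rwa [metz, Matrix.of_apply, if_pos rfl] at this
        have h4 : A m0 i i * (sg * x u i - B u i) ≤ K * (-(sg * x u i - B u i)) := by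
          rw [hKdef]
          calc A m0 i i * (sg * x u i - B u i)
              ≤ |A m0 i i * (sg * x u i - B u i)| := le_abs_self _
            _ = |A m0 i i| * (-(sg * x u i - B u i)) := by
                rw [abs_mul, abs_of_nonpos hgle]
        linarith
      have hterm2 : ∀ j, sg * sint (ν m0 i j) (fun θ => x (u + (θ:ℝ)) j)
          ≤ ((μ0 i j) Set.univ).toReal * (Real.exp (β*h) * B u j) := by
        intro j
        have hCnn : 0 ≤ (c+ε) * ξ j * Real.exp (-β*u) * Real.exp (β*h) :=
          le_of_lt (mul_pos (mul_pos (mul_pos (by linarith) (hξpos j)) (Real.exp_pos _))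
            (Real.exp_pos _))
        have hbd : ∀ θ : Set.Icc (-h) (0:ℝ),
            |x (u + (θ:ℝ)) j| ≤ (c+ε) * ξ j * Real.exp (-β*u) * Real.exp (β*h) := by
          intro θ
          have hθ1 : -h ≤ u + (θ:ℝ) := by have := θ.2.1; linarith
          have hθ2 : u + (θ:ℝ) < tstar := by have := θ.2.2; linarith [hu.2]
          refine (hhist (u + (θ:ℝ)) hθ1 hθ2 j).trans ?_
          simp only [hB]
          have hexp : Real.exp (-β*(u+(θ:ℝ))) ≤ Real.exp (-β*u) * Real.exp (β*h) := by
            rw [← Real.exp_add]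
            apply Real.exp_le_exp.mpr
            have h9 := θ.2.1
            linarith [mul_le_mul_of_nonneg_left (show -(θ:ℝ) ≤ h by linarith) hβpos.le]
          linarith [mul_le_mul_of_nonneg_left hexp
            (mul_nonneg (show (0:ℝ) ≤ c+ε by linarith) (hξpos j).le)]
        calc sg * sint (ν m0 i j) (fun θ => x (u + (θ:ℝ)) j)
            ≤ |sint (ν m0 i j) (fun θ => x (u + (θ:ℝ)) j)| := hsgy _
          _ ≤ tvar (ν m0 i j) * ((c+ε) * ξ j * Real.exp (-β*u) * Real.exp (β*h)) :=
              sint_bound _ hCnn hbd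
          _ ≤ ((μ0 i j) Set.univ).toReal * (Real.exp (β*h) * B u j) := by
              simp only [hB]
              have h5 : tvar (ν m0 i j) ≤ ((μ0 i j) Set.univ).toReal := hdomV m0 i j
              have h6 : (c+ε) * ξ j * Real.exp (-β*u) * Real.exp (β*h)
                  = Real.exp (β*h) * ((c+ε) * ξ j * Real.exp (-β*u)) := by ring
              rw [h6]
              exact mul_le_mul_of_nonneg_right h5
                (le_of_lt (mul_pos (Real.exp_pos _)
                  (mul_pos (mul_pos (by linarith) (hξpos j)) (Real.exp_pos _))))
      have esplit : ∀ (f : Fin n → ℝ),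
          ∑ j, f j = f i + ∑ j ∈ Finset.univ.erase i, f j := fun f =>
        (Finset.add_sum_erase Finset.univ f (Finset.mem_univ i)).symm
      have e2 : (∑ j, sg * (A m0 i j * x u j))
          ≤ (∑ j, A0 i j * B u j) + K * (-(sg * x u i - B u i)) := by
        rw [esplit (fun j => sg * (A m0 i j * x u j)), esplit (fun j => A0 i j * B u j)]
        have hrest : ∑ j ∈ Finset.univ.erase i, sg * (A m0 i j * x u j)
            ≤ ∑ j ∈ Finset.univ.erase i, A0 i j * B u j :=
          Finset.sum_le_sum fun j hj => hterm1 j (Finset.ne_of_mem_erase hj)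
        linarith [hterm1i]
      have e3 : (∑ j, sg * sint (ν m0 i j) fun θ => x (u + (θ:ℝ)) j)
          ≤ ∑ j, ((μ0 i j) Set.univ).toReal * (Real.exp (β*h) * B u j) :=
        Finset.sum_le_sum fun j _ => hterm2 j
      have hsum1 : ∑ j, A0 i j * B u j
          = (c+ε) * Real.exp (-β*u) * ∑ j, A0 i j * ξ j := by
        rw [Finset.mul_sum]
        apply Finset.sum_congr rfl
        intro j _
        simp only [hB]
        ring
      have hsum2 : ∑ j, ((μ0 i j) Set.univ).toReal * (Real.exp (β*h) * B u j)
          = (c+ε) * Real.exp (-β*u) * (Real.exp (β*h) * Sv i) := by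
        simp only [hSvdef]
        rw [Finset.mul_sum, Finset.mul_sum]
        apply Finset.sum_congr rfl
        intro j _
        simp only [hB]
        ring
      have hDle : sg * D u ≤ (c+ε) * Real.exp (-β*u)
          * ((∑ j, A0 i j * ξ j) + Real.exp (β*h) * Sv i)
          + K * (-(sg * x u i - B u i)) := by
        have hDu : D u = (∑ j, A m0 i j * x u j) +
            ∑ j, sint (ν m0 i j) fun θ => x (u + (θ:ℝ)) j := by
          simp only [hDdef]
          rw [hσu]
        rw [hDu, mul_add, Finset.mul_sum, Finset.mul_sum]
        have := e2
        have := e3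
        rw [hsum1] at e2
        rw [hsum2] at e3
        linarith [e2, e3]
      -- conclude w' u ≤ 0
      have hβi := hβkey i
      have hcε : (0:ℝ) < c + ε := by linarith
      have hQpos : (0:ℝ) < (c+ε) * Real.exp (-β*u) := mul_pos hcε (Real.exp_pos _)
      have h7 : (c+ε) * Real.exp (-β*u)
            * ((∑ j, A0 i j * ξ j) + Real.exp (β*h) * Sv i + β * ξ i)
          ≤ (c+ε) * Real.exp (-β*u) * (-(1/2)) :=
        mul_le_mul_of_nonneg_left (by linarith) hQpos.le
      have h8 : sg * D u - (c+ε) * ξ i * (-β * Real.exp (-β*u))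
            + (sg * x u i - B u i) * K
          ≤ (c+ε) * Real.exp (-β*u) * (-(1/2)) := by
        have l1 : sg * D u - (c+ε) * ξ i * (-β * Real.exp (-β*u))
              + (sg * x u i - B u i) * K
            = (sg * D u) + ((c+ε) * ξ i * (β * Real.exp (-β*u))
              + (sg * x u i - B u i) * K) := by ring
        have l3 : (c+ε) * Real.exp (-β*u)
              * ((∑ j, A0 i j * ξ j) + Real.exp (β*h) * Sv i)
              + K * (-(sg * x u i - B u i))
              + ((c+ε) * ξ i * (β * Real.exp (-β*u)) + (sg * x u i - B u i) * K)
            = (c+ε) * Real.exp (-β*u)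
              * ((∑ j, A0 i j * ξ j) + Real.exp (β*h) * Sv i + β * ξ i) := by ring
        calc sg * D u - (c+ε) * ξ i * (-β * Real.exp (-β*u)) + (sg * x u i - B u i) * K
            = (sg * D u) + ((c+ε) * ξ i * (β * Real.exp (-β*u))
              + (sg * x u i - B u i) * K) := l1
          _ ≤ ((c+ε) * Real.exp (-β*u)
                * ((∑ j, A0 i j * ξ j) + Real.exp (β*h) * Sv i)
                + K * (-(sg * x u i - B u i)))
              + ((c+ε) * ξ i * (β * Real.exp (-β*u)) + (sg * x u i - B u i) * K) :=
            add_le_add_left hDle _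
          _ = (c+ε) * Real.exp (-β*u)
              * ((∑ j, A0 i j * ξ j) + Real.exp (β*h) * Sv i + β * ξ i) := l3
          _ ≤ (c+ε) * Real.exp (-β*u) * (-(1/2)) := h7
      have e10 : w' u = (sg * D u - (c+ε) * ξ i * (-β * Real.exp (-β*u))
          + (sg * x u i - B u i) * K) * Real.exp (K*u) := by
        simp only [hw'def]
        ring
      rw [e10]
      have h11 := mul_le_mul_of_nonneg_right h8 (Real.exp_pos (K*u)).le
      have h12 : (c+ε) * Real.exp (-β*u) * (-(1/2)) * Real.exp (K*u) ≤ 0 := by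
        have hp : 0 < (c+ε) * Real.exp (-β*u) * Real.exp (K*u) :=
          mul_pos hQpos (Real.exp_pos _)
        have e12 : (c+ε) * Real.exp (-β*u) * (-(1/2)) * Real.exp (K*u)
            = -(1/2) * ((c+ε) * Real.exp (-β*u) * Real.exp (K*u)) := by ring
        linarith [hp, e12]
      exact le_trans h11 h12
    -- apply the fencing theorem
    have hfence := image_le_of_deriv_right_le_deriv_boundary (f := w) (f' := w')
      (B := fun _ => w a) (B' := fun _ => (0:ℝ)) hwcont hderivu (le_refl (w a))
      continuousOn_const (fun u _ => (hasDerivAt_const u (w a)).hasDerivWithinAt) hbound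
    have h13 : w tstar ≤ w a := hfence ⟨hat.le, le_rfl⟩
    have hwa : w a < 0 := by
      simp only [hwdef]
      apply mul_neg_of_neg_of_pos ?_ (Real.exp_pos _)
      have h1 := hlow a hann hat i
      have h2 := hsgy (x a i)
      linarith
    have hwt : w tstar = 0 := by
      simp only [hwdef]
      rw [hsgx, hXeq, sub_self, zero_mul]
    rw [hwt] at h13
    linarith
  -- pass to the limit ε → 0
  have hfinal : ∀ i, |x t i| ≤ c * ξ i * Real.exp (-β*t) := by
    intro i
    have hp : 0 < ξ i * Real.exp (-β*t) := mul_pos (hξpos i) (Real.exp_pos _)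
    apply le_of_forall_pos_le_add
    intro ε' hε'
    have h1 := hmain (ε'/(ξ i * Real.exp (-β*t))) (div_pos hε' hp) t ht i
    have h2 : (c + ε'/(ξ i * Real.exp (-β*t))) * ξ i * Real.exp (-β*t)
        = c * ξ i * Real.exp (-β*t) + ε' := by
      have hc9 : ε'/(ξ i * Real.exp (-β*t)) * (ξ i * Real.exp (-β*t)) = ε' :=
        div_mul_cancel₀ _ (ne_of_gt hp)
      calc (c + ε'/(ξ i * Real.exp (-β*t))) * ξ i * Real.exp (-β*t)
          = c * ξ i * Real.exp (-β*t)
            + ε'/(ξ i * Real.exp (-β*t)) * (ξ i * Real.exp (-β*t)) := by ring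
        _ = c * ξ i * Real.exp (-β*t) + ε' := by rw [hc9]
    rw [h2] at h1
    exact h1.le
  refine (pi_norm_le_iff_of_nonneg (mul_nonneg (mul_nonneg
    (le_of_lt (div_pos hξmaxpos hξminpos)) (Real.exp_pos _).le) (norm_nonneg _))).mpr
    fun i => ?_
  rw [Real.norm_eq_abs]
  have hmul : ‖φ‖ * ξ i * Real.exp (-β*t) ≤ ‖φ‖ * ξmax * Real.exp (-β*t) := by
    have h1 : ‖φ‖ * ξ i ≤ ‖φ‖ * ξmax :=
      mul_le_mul_of_nonneg_left (hξlemax i) (norm_nonneg _)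
    exact mul_le_mul_of_nonneg_right h1 (Real.exp_pos _).le
  calc |x t i| ≤ c * ξ i * Real.exp (-β*t) := hfinal i
    _ = (‖φ‖ * ξ i * Real.exp (-β*t))/ξmin := by rw [hcdef]; ring
    _ ≤ (‖φ‖ * ξmax * Real.exp (-β*t))/ξmin := by
        exact (div_le_div_iff_of_pos_right hξminpos).mpr hmul
    _ = (ξmax/ξmin) * Real.exp (-β*t) * ‖φ‖ := by ring


end
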